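/- Let S_1, S_2 be finite nonempty sets with ρ* = J(S_1, S_2), and let V_1 ⊆ S_1, V_2 ⊆ S_2 with |S_i ∖ V_i| ≤ η·|S_1 ∪ S_2| for i = 1,2 and some η ≥ 0. Then |J(V_1, V_2) − ρ*| ≤ 4η/(1 − 2η), provided η < 1/2 and V_1 ∪ V_2 ≠ ∅. -/
import Mathlib


/-- If `V_1 ⊆ S_1`, `V_2 ⊆ S_2` cover the true clusters up to an
`η`-fraction of `|S_1 ∪ S_2|` (with `η < 1/2`) and `V_1 ∪ V_2 ≠ ∅`, then the
empirical correlation `J(V_1,V_2)` is within `4η/(1-2η)` of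
`ρ* = J(S_1,S_2)`. -/
theorem jaccard_subset_approx {α : Type*} [DecidableEq α]
    (S₁ S₂ V₁ V₂ : Finset α) (hS₁ : S₁.Nonempty) (hS₂ : S₂.Nonempty)
    (hV₁ : V₁ ⊆ S₁) (hV₂ : V₂ ⊆ S₂) (η : ℝ) (hη0 : 0 ≤ η) (hη : η < 1 / 2)
    (h₁ : ((S₁ \ V₁).card : ℝ) ≤ η * (S₁ ∪ S₂).card)
    (h₂ : ((S₂ \ V₂).card : ℝ) ≤ η * (S₁ ∪ S₂).card)
    (hV : (V₁ ∪ V₂).Nonempty) :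
    |((V₁ ∩ V₂).card : ℝ) / ((V₁ ∪ V₂).card : ℝ) -
        ((S₁ ∩ S₂).card : ℝ) / ((S₁ ∪ S₂).card : ℝ)| ≤ 4 * η / (1 - 2 * η) := by
  set U : ℝ := ((S₁ ∪ S₂).card : ℝ) with hUdef
  set u : ℝ := ((V₁ ∪ V₂).card : ℝ) with hudef
  set I : ℝ := ((S₁ ∩ S₂).card : ℝ) with hIdef
  set i : ℝ := ((V₁ ∩ V₂).card : ℝ) with hidef
  have hsub1 : S₁ ∩ S₂ ⊆ (V₁ ∩ V₂) ∪ ((S₁ \ V₁) ∪ (S₂ \ V₂)) := by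
    intro x hx
    simp only [Finset.mem_inter, Finset.mem_union, Finset.mem_sdiff] at *
    by_cases h1 : x ∈ V₁ <;> by_cases h2 : x ∈ V₂ <;> tauto
  have hsub2 : S₁ ∪ S₂ ⊆ (V₁ ∪ V₂) ∪ ((S₁ \ V₁) ∪ (S₂ \ V₂)) := by
    intro x hx
    simp only [Finset.mem_union, Finset.mem_sdiff] at *
    by_cases h1 : x ∈ V₁ <;> by_cases h2 : x ∈ V₂ <;> tauto
  have c1n : (S₁ ∩ S₂).card ≤ (V₁ ∩ V₂).card + ((S₁ \ V₁).card + (S₂ \ V₂).card) :=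
    (Finset.card_le_card hsub1).trans ((Finset.card_union_le _ _).trans
      (Nat.add_le_add_left (Finset.card_union_le _ _) _))
  have c2n : (S₁ ∪ S₂).card ≤ (V₁ ∪ V₂).card + ((S₁ \ V₁).card + (S₂ \ V₂).card) :=
    (Finset.card_le_card hsub2).trans ((Finset.card_union_le _ _).trans
      (Nat.add_le_add_left (Finset.card_union_le _ _) _))
  have c1 : I ≤ i + 2 * η * U := by
    have h : (((S₁ ∩ S₂).card : ℝ)) ≤ ((V₁ ∩ V₂).card : ℝ) +
        (((S₁ \ V₁).card : ℝ) + ((S₂ \ V₂).card : ℝ)) := by exact_mod_cast c1n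
    linarith
  have c2 : U ≤ u + 2 * η * U := by
    have h : (((S₁ ∪ S₂).card : ℝ)) ≤ ((V₁ ∪ V₂).card : ℝ) +
        (((S₁ \ V₁).card : ℝ) + ((S₂ \ V₂).card : ℝ)) := by exact_mod_cast c2n
    linarith
  have hiI : i ≤ I := by
    rw [hidef, hIdef]
    exact_mod_cast Finset.card_le_card (Finset.inter_subset_inter hV₁ hV₂)
  have huU : u ≤ U := by
    rw [hudef, hUdef]
    exact_mod_cast Finset.card_le_card (Finset.union_subset_union hV₁ hV₂)
  have hIU : I ≤ U := by
    rw [hIdef, hUdef]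
    exact_mod_cast Finset.card_le_card (Finset.inter_subset_union (s := S₁) (t := S₂))
  have hi0 : (0:ℝ) ≤ i := by rw [hidef]; positivity
  have hu0 : (0:ℝ) < u := by
    rw [hudef]
    exact_mod_cast Finset.card_pos.mpr hV
  have hU0 : (0:ℝ) < U := lt_of_lt_of_le hu0 huU
  have hden : (0:ℝ) < 1 - 2 * η := by linarith
  have hu1 : (1 - 2 * η) * U ≤ u := by linarith
  rw [div_sub_div _ _ hu0.ne' hU0.ne', abs_div, abs_of_pos (mul_pos hu0 hU0),
    div_le_div_iff₀ (mul_pos hu0 hU0) hden]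
  have habs : |i * U - I * u| ≤ 4 * η * U * U := by
    rw [abs_le]
    constructor
    · nlinarith [mul_nonneg (sub_nonneg.mpr hiI) hU0.le,
        mul_nonneg (sub_nonneg.mpr huU) (sub_nonneg.mpr hIU)]
    · nlinarith [mul_nonneg (sub_nonneg.mpr hiI) hU0.le,
        mul_nonneg (sub_nonneg.mpr huU) (sub_nonneg.mpr hIU)]
  calc |i * U - u * I| * (1 - 2 * η) = |i * U - I * u| * (1 - 2 * η) := by
        rw [mul_comm u I]
    _ ≤ (4 * η * U * U) * (1 - 2 * η) := mul_le_mul_of_nonneg_right habs hden.le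
    _ = 4 * η * U * ((1 - 2 * η) * U) := by ring
    _ ≤ 4 * η * U * u :=
        mul_le_mul_of_nonneg_left hu1 (show (0:ℝ) ≤ 4 * η * U by positivity)
    _ = 4 * η * (u * U) := by ring
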